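/- Let G be an adjoint semisimple group over a field K with separable closure K^s, let T be a maximal K-torus of G, and let g, g' ∈ G(K^s) be strongly regular semisimple elements contained in T(K^s) and T'(K^s) respectively, where T' is another maximal K-torus. Suppose b ∈ G(K^s) satisfies b g' b⁻¹ = g. Then θ_b ∘ φ_{T',g'} = φ_{T,g}, where φ_{T,g} : Gal_K → GL(X*(T_{K^s})) is the twisted Galois action defined by σ·χ = σ(χ) ∘ inn(a_σ) for any a_σ ∈ G(K^s) with σ(g) = a_σ g a_σ⁻¹. -/
import Mathlib


/-- (Lemma 2.7 of the paper.)  Let `G` be adjoint semisimple over `K`, `T, T'` maximal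
`K`-tori, and `g ∈ T(K^s)`, `g' ∈ T'(K^s)` strongly regular elements with
`b g' b⁻¹ = g` for some `b ∈ G(K^s)`.  Then `θ_b ∘ φ_{T',g'} = φ_{T,g}`.

Formalized abstractly: `Γ = Gal_K` acts on `Gs = G(K^s)` and on `U = (K^s)ˣ`; strong
regularity (for adjoint `G`) is encoded by the centralizer identities `Z_{Gs}(g) = T`
and `Z_{Gs}(g') = T'`; `a σ` (resp. `a' σ`) is a choice of `a_σ ∈ N_G(T)(K^s)` with
`σ(g) = a_σ g a_σ⁻¹` defining `φ_{T,g}` (resp. `φ_{T',g'}`); characters of `T` are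
homomorphisms `↥T →* U`, `(σ·χ)(t) = σ • χ(σ⁻¹ • t)`, and the conclusion
`θ_b ∘ φ_{T',g'} = φ_{T,g}` is stated pointwise:
`(φ_{T',g'}(σ)(χ ∘ inn b))(t') = (φ_{T,g}(σ)(χ))(b t' b⁻¹)`. -/
theorem twisted_galois_action_commutes_with_conjugation
    {Γ Gs U : Type*} [Group Γ] [Group Gs] [CommGroup U]
    [MulDistribMulAction Γ Gs] [MulDistribMulAction Γ U]
    (T T' : Subgroup Gs) (g g' : Gs)
    (hcomm : ∀ x ∈ T, ∀ y ∈ T, x * y = y * x)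
    (hcomm' : ∀ x ∈ T', ∀ y ∈ T', x * y = y * x)
    (hZ : ∀ c : Gs, c * g * c⁻¹ = g ↔ c ∈ T)
    (hZ' : ∀ c : Gs, c * g' * c⁻¹ = g' ↔ c ∈ T')
    (hTstab : ∀ (σ : Γ) (t : Gs), t ∈ T → σ • t ∈ T)
    (hT'stab : ∀ (σ : Γ) (t : Gs), t ∈ T' → σ • t ∈ T')
    (a a' : Γ → Gs)
    (ha : ∀ σ : Γ, σ • g = a σ * g * (a σ)⁻¹)
    (hN : ∀ (σ : Γ) (t : Gs), t ∈ T → a σ * t * (a σ)⁻¹ ∈ T)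
    (ha' : ∀ σ : Γ, σ • g' = a' σ * g' * (a' σ)⁻¹)
    (hN' : ∀ (σ : Γ) (t : Gs), t ∈ T' → a' σ * t * (a' σ)⁻¹ ∈ T')
    (b : Gs) (hbg : b * g' * b⁻¹ = g)
    (hbT : ∀ t ∈ T', b * t * b⁻¹ ∈ T) :
    ∀ (σ : Γ) (χ : ↥T →* U) (t' : ↥T'),
      σ • χ ⟨b * (σ⁻¹ • (a' σ * (t' : Gs) * (a' σ)⁻¹)) * b⁻¹,
              hbT _ (hT'stab σ⁻¹ _ (hN' σ _ t'.2))⟩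
        = σ • χ ⟨σ⁻¹ • (a σ * (b * (t' : Gs) * b⁻¹) * (a σ)⁻¹),
                 hTstab σ⁻¹ _ (hN σ _ (hbT _ t'.2))⟩ := by
  intro σ χ t'
  -- the conjugating element `v` lies in `T'`
  have hv : (a σ * b)⁻¹ * (σ • b) * a' σ ∈ T' := by
    rw [← hZ']
    have e1 : (a σ * b)⁻¹ * (σ • b) * a' σ * g' * ((a σ * b)⁻¹ * (σ • b) * a' σ)⁻¹
        = (a σ * b)⁻¹ * ((σ • b) * (a' σ * g' * (a' σ)⁻¹) * (σ • b)⁻¹) * (a σ * b) := by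
      group
    have e2 : (σ • b) * (σ • g') * (σ • b)⁻¹ = σ • g := by
      rw [← smul_inv', ← smul_mul', ← smul_mul', hbg]
    rw [e1, ← ha' σ, e2, ha σ, ← hbg]
    group
  have hcv : ((a σ * b)⁻¹ * (σ • b) * a' σ) * (t' : Gs) * ((a σ * b)⁻¹ * (σ • b) * a' σ)⁻¹
      = (t' : Gs) := by
    rw [hcomm' _ hv _ t'.2]
    group
  have key : b * (σ⁻¹ • (a' σ * (t' : Gs) * (a' σ)⁻¹)) * b⁻¹
      = σ⁻¹ • (a σ * (b * (t' : Gs) * b⁻¹) * (a σ)⁻¹) := by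
    apply MulAction.injective σ
    show σ • _ = σ • _
    simp only [smul_mul', smul_inv', smul_inv_smul]
    have e3 : (σ • b) * (a' σ * (t' : Gs) * (a' σ)⁻¹) * (σ • b)⁻¹
        = (a σ * b) * (((a σ * b)⁻¹ * (σ • b) * a' σ) * (t' : Gs)
            * ((a σ * b)⁻¹ * (σ • b) * a' σ)⁻¹) * (a σ * b)⁻¹ := by
      group
    rw [e3, hcv]
    group
  exact congrArg (σ • ·) (congrArg χ (Subtype.ext key))
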